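/- Let m, n, w, d, l be natural numbers with 1 ≤ w ≤ m, l ≥ 1, and let n_0 > n_1 > ⋯ > n_{l−1} be a strictly decreasing sequence of positive integers with n_0 = n such that for every 0 ≤ i ≤ l−1: n_i divides n·w, n_i ≤ n, and n·w/m ≤ n_i, and for every 1 ≤ i ≤ l−1: n_i·(n·w) ≤ (n·w − d)·n_{i−1}. Set w_i = n·w/n_i. Then Σ_{i=0}^{l−1} B(n, n_i, d)·A(m, n_i, w_i, d) ≤ B(m·n, n·w, d). -/

import Mathlib

open Finset

/-- Total Hamming distance between two words in `J(m,w)^n`: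
the number of positions (among all `m·n` entries) in which they differ. -/
def arrDist {m n : ℕ} (X Y : Fin n → Fin m → ZMod 2) : ℕ :=
  ∑ k, hammingDist (X k) (Y k)

/-- `C` is a constant-weight array code in `J(m,w)^n` with minimum distance `2d`. -/
def isCWAC (m n w d : ℕ) (C : Finset (Fin n → Fin m → ZMod 2)) : Prop :=
  C.Nonempty ∧ (∀ X ∈ C, ∀ k, hammingNorm (X k) = w) ∧
    ∀ X ∈ C, ∀ Y ∈ C, X ≠ Y → 2 * d ≤ arrDist X Y

/-- Maximum cardinality of a CWAC in `J(m,w)^n` with minimum Hamming distance `2d`. -/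
noncomputable def Amax (m n w d : ℕ) : ℕ :=
  sSup { c | ∃ C : Finset (Fin n → Fin m → ZMod 2), isCWAC m n w d C ∧ C.card = c }

/-- Maximum cardinality of an anticode in `J(m,w)^n` with diameter `2δ`. -/
noncomputable def alphaMax (m n w δ : ℕ) : ℕ :=
  sSup { c | ∃ C : Finset (Fin n → Fin m → ZMod 2), C.Nonempty ∧
    (∀ X ∈ C, ∀ k, hammingNorm (X k) = w) ∧
    (∀ X ∈ C, ∀ Y ∈ C, arrDist X Y ≤ 2 * δ) ∧ C.card = c }

/-- Maximum cardinality of a binary constant-weight code in `J(n,w)` with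
minimum Hamming distance `2d`. -/
noncomputable def Bmax (n w d : ℕ) : ℕ :=
  sSup { c | ∃ C : Finset (Fin n → ZMod 2), C.Nonempty ∧
    (∀ x ∈ C, hammingNorm x = w) ∧
    (∀ x ∈ C, ∀ y ∈ C, x ≠ y → 2 * d ≤ hammingDist x y) ∧ C.card = c }

/-- Maximum cardinality of a nonrestricted `q`-ary code of length `n` with
minimum Hamming distance `d`. -/
noncomputable def Cmax (q n d : ℕ) : ℕ :=
  sSup { c | ∃ C : Finset (Fin n → Fin q), C.Nonempty ∧
    (∀ x ∈ C, ∀ y ∈ C, x ≠ y → d ≤ hammingDist x y) ∧ C.card = c }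

/-- `ν(i)`: the number of vectors of weight `u` at Hamming distance `i` from a
fixed vector of weight `w` in `GF(2)^m`. -/
def nuF (m w u : ℕ) (i : ℕ) : ℕ :=
  if (u + w - i) % 2 = 0 ∧ i ≤ u + w ∧ w ≤ u + i then
    Nat.choose w ((u + w - i) / 2) * Nat.choose (m - w) ((u + i - w) / 2)
  else 0

/-! ### Auxiliary lemmas -/

section aux

lemma zmod2_eq_of_ne_iff : ∀ (a b : ZMod 2), (a ≠ 0 ↔ b ≠ 0) → a = b := by decide

lemma zmod2_ne_zero : ∀ a : ZMod 2, a ≠ 0 → a = 1 := by decide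

lemma arrDist_comm {m n : ℕ} (X Y : Fin n → Fin m → ZMod 2) : arrDist X Y = arrDist Y X := by
  simp [arrDist, hammingDist_comm]

/-- Flatten an `n × m` array to a vector of length `m·n`. -/
def flat {m n : ℕ} (X : Fin n → Fin m → ZMod 2) : Fin (m * n) → ZMod 2 :=
  fun p => X (finProdFinEquiv.symm p).2 (finProdFinEquiv.symm p).1

lemma hammingDist_flat {m n : ℕ} (X Y : Fin n → Fin m → ZMod 2) :
    hammingDist (flat X) (flat Y) = arrDist X Y := by
  classical
  simp only [hammingDist, arrDist, Finset.card_filter]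
  rw [← Equiv.sum_comp (finProdFinEquiv : Fin m × Fin n ≃ Fin (m * n))
    (fun p => if flat X p ≠ flat Y p then 1 else 0)]
  simp only [flat, Equiv.symm_apply_apply]
  rw [Fintype.sum_prod_type]
  rw [Finset.sum_comm]

lemma flat_inj {m n : ℕ} (X Y : Fin n → Fin m → ZMod 2) (h : flat X = flat Y) : X = Y := by
  funext k j
  have := congrFun h (finProdFinEquiv (j, k))
  simpa [flat] using this

lemma hammingNorm_flat {m n : ℕ} (X : Fin n → Fin m → ZMod 2) :
    hammingNorm (flat X) = ∑ k, hammingNorm (X k) := by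
  have h0 : flat (fun (_ : Fin n) (_ : Fin m) => (0 : ZMod 2)) = 0 := by
    funext p; simp [flat]
  rw [← hammingDist_zero_right, ← h0, hammingDist_flat]
  simp only [arrDist]
  refine Finset.sum_congr rfl fun k _ => ?_
  exact hammingDist_zero_right (X k)

/-- Place the `s` columns of `X` at the positions of the support of `x`. -/
noncomputable def emb {m n : ℕ} (s : ℕ) (x : Fin n → ZMod 2)
    (X : Fin s → Fin m → ZMod 2) : Fin n → Fin m → ZMod 2 :=
  fun k =>
    if h : hammingNorm x = s ∧ x k ≠ 0 then
      X (((univ.filter fun k' => x k' ≠ 0).orderIsoOfFin h.1).symm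
        ⟨k, by simp [h.2]⟩)
    else 0

lemma emb_sum {m n s : ℕ} (x : Fin n → ZMod 2) (hx : hammingNorm x = s)
    (X Y : Fin s → Fin m → ZMod 2)
    (f : (Fin m → ZMod 2) → (Fin m → ZMod 2) → ℕ) (hf : f 0 0 = 0) :
    ∑ k, f (emb s x X k) (emb s x Y k) = ∑ j, f (X j) (Y j) := by
  classical
  have hcard : (univ.filter fun k' => x k' ≠ 0).card = s := hx
  have h1 : ∑ k, f (emb s x X k) (emb s x Y k)
      = ∑ k ∈ (univ.filter fun k' => x k' ≠ 0), f (emb s x X k) (emb s x Y k) := by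
    rw [← Finset.sum_subset (Finset.subset_univ _)]
    intro k _ hk
    have hxk : ¬ x k ≠ 0 := by simpa using hk
    simp [emb, hxk, hf]
  rw [h1]
  refine Finset.sum_bij'
    (i := fun k hk => ((univ.filter fun k' => x k' ≠ 0).orderIsoOfFin hcard).symm ⟨k, hk⟩)
    (j := fun j _ => (((univ.filter fun k' => x k' ≠ 0).orderIsoOfFin hcard) j : Fin n))
    (fun k hk => Finset.mem_univ _)
    (fun j _ => by
      exact (((univ.filter fun k' => x k' ≠ 0).orderIsoOfFin hcard) j).2)
    (fun k hk => by simp)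
    (fun j _ => OrderIso.symm_apply_apply _ j)
    (fun k hk => by
      have hk' : x k ≠ 0 := by simpa using hk
      simp only [emb, dif_pos (⟨hx, hk'⟩ : hammingNorm x = s ∧ x k ≠ 0)])

lemma emb_arrDist {m n s : ℕ} (x : Fin n → ZMod 2) (hx : hammingNorm x = s)
    (X Y : Fin s → Fin m → ZMod 2) :
    ∑ k, hammingDist (emb s x X k) (emb s x Y k) = ∑ j, hammingDist (X j) (Y j) :=
  emb_sum x hx X Y hammingDist (by simp)

lemma emb_norm {m n s : ℕ} (x : Fin n → ZMod 2) (hx : hammingNorm x = s)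
    (X : Fin s → Fin m → ZMod 2) :
    ∑ k, hammingNorm (emb s x X k) = ∑ j, hammingNorm (X j) :=
  emb_sum x hx X X (fun a _ => hammingNorm a) (by simp)

lemma emb_ne_zero_iff {m n s : ℕ} (x : Fin n → ZMod 2) (hx : hammingNorm x = s)
    (X : Fin s → Fin m → ZMod 2) (hX : ∀ j, X j ≠ 0) (k : Fin n) :
    emb s x X k ≠ 0 ↔ x k ≠ 0 := by
  constructor
  · intro h
    by_contra hk
    simp [emb, hk] at h
  · intro hk
    simp only [emb, dif_pos (⟨hx, hk⟩ : hammingNorm x = s ∧ x k ≠ 0)]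
    exact hX _

lemma emb_col {m n s : ℕ} (x : Fin n → ZMod 2) (hx : hammingNorm x = s)
    (X : Fin s → Fin m → ZMod 2) (j : Fin s) :
    emb s x X ((((univ.filter fun k' => x k' ≠ 0).orderIsoOfFin hx) j : Fin n)) = X j := by
  have hcard : (univ.filter fun k' => x k' ≠ 0).card = s := hx
  set σ := (univ.filter fun k' => x k' ≠ 0).orderIsoOfFin hx
  have hk' : x (σ j : Fin n) ≠ 0 := (Finset.mem_filter.mp (σ j).2).2
  simp only [emb, dif_pos (⟨hx, hk'⟩ : hammingNorm x = s ∧ x (σ j : Fin n) ≠ 0)]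
  have : (⟨(σ j : Fin n), by simp [hk']⟩ : {a // a ∈ univ.filter fun k' => x k' ≠ 0}) = σ j :=
    Subtype.ext rfl
  rw [this]
  exact congrArg X (OrderIso.symm_apply_apply σ j)

lemma emb_filter_card {m n s : ℕ} (x : Fin n → ZMod 2) (hx : hammingNorm x = s)
    (X : Fin s → Fin m → ZMod 2) (hX : ∀ j, X j ≠ 0) :
    (univ.filter fun k => emb s x X k ≠ 0).card = s := by
  have : (univ.filter fun k => emb s x X k ≠ 0) = univ.filter fun k => x k ≠ 0 :=
    Finset.filter_congr fun k _ => by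
      simpa using emb_ne_zero_iff x hx X hX k
  rw [this]; exact hx

lemma emb_inj {m n s : ℕ} (x x' : Fin n → ZMod 2) (hx : hammingNorm x = s)
    (hx' : hammingNorm x' = s)
    (X X' : Fin s → Fin m → ZMod 2) (hX : ∀ j, X j ≠ 0) (hX' : ∀ j, X' j ≠ 0)
    (h : emb s x X = emb s x' X') : x = x' ∧ X = X' := by
  have hxx : x = x' := by
    funext k
    refine zmod2_eq_of_ne_iff _ _ ?_
    rw [← emb_ne_zero_iff x hx X hX k, ← emb_ne_zero_iff x' hx' X' hX' k, h]
  subst hxx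
  refine ⟨rfl, funext fun j => ?_⟩
  calc X j = emb s x X (((univ.filter fun k' => x k' ≠ 0).orderIsoOfFin hx) j : Fin n) :=
        (emb_col x hx X j).symm
    _ = emb s x X' (((univ.filter fun k' => x k' ≠ 0).orderIsoOfFin hx) j : Fin n) := by rw [h]
    _ = X' j := emb_col x hx X' j

lemma emb_norm_apply {m n s u : ℕ} (x : Fin n → ZMod 2) (hx : hammingNorm x = s)
    (X : Fin s → Fin m → ZMod 2) (hXu : ∀ j, hammingNorm (X j) = u) (k : Fin n) :
    hammingNorm (emb s x X k) = if x k ≠ 0 then u else 0 := by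
  by_cases hk : x k ≠ 0
  · rw [if_pos hk]
    simp only [emb, dif_pos (⟨hx, hk⟩ : hammingNorm x = s ∧ x k ≠ 0)]
    exact hXu _
  · rw [if_neg hk]
    simp [emb, hk]

lemma cross_le {m n s t u v : ℕ} (x y : Fin n → ZMod 2)
    (hx : hammingNorm x = s) (hy : hammingNorm y = t)
    (X : Fin s → Fin m → ZMod 2) (Y : Fin t → Fin m → ZMod 2)
    (hXu : ∀ j, hammingNorm (X j) = u) (hYv : ∀ j, hammingNorm (Y j) = v) :
    s * u + t * v ≤ (∑ k, hammingDist (emb s x X k) (emb t y Y k)) + 2 * (u * t) := by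
  have hA : ∑ k, hammingNorm (emb s x X k) = s * u := by
    rw [emb_norm x hx]
    simp [hXu, Finset.sum_const, mul_comm]
  have hB : ∑ k, hammingNorm (emb t y Y k) = t * v := by
    rw [emb_norm y hy]
    simp [hYv, Finset.sum_const, mul_comm]
  have hpt : ∀ k, hammingNorm (emb s x X k) + hammingNorm (emb t y Y k)
      ≤ hammingDist (emb s x X k) (emb t y Y k) + 2 * (if y k ≠ 0 then u else 0) := by
    intro k
    by_cases hk : y k ≠ 0
    · rw [if_pos hk]
      have h1 : hammingNorm (emb s x X k) ≤ u := by
        rw [emb_norm_apply x hx X hXu k]; split <;> omega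
      have h2 : hammingNorm (emb t y Y k)
          ≤ hammingDist (emb t y Y k) (emb s x X k) + hammingNorm (emb s x X k) := by
        calc hammingNorm (emb t y Y k) = hammingDist (emb t y Y k) 0 :=
              (hammingDist_zero_right _).symm
          _ ≤ hammingDist (emb t y Y k) (emb s x X k) + hammingDist (emb s x X k) 0 :=
              hammingDist_triangle _ _ _
          _ = _ := by rw [hammingDist_zero_right]
      rw [hammingDist_comm] at h2
      omega
    · have hB0 : emb t y Y k = 0 := by simp [emb, hk]
      rw [hB0, if_neg hk]
      rw [hammingDist_zero_right]
      simp
  calc s * u + t * v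
      = ∑ k, (hammingNorm (emb s x X k) + hammingNorm (emb t y Y k)) := by
        rw [Finset.sum_add_distrib, hA, hB]
    _ ≤ ∑ k, (hammingDist (emb s x X k) (emb t y Y k) + 2 * (if y k ≠ 0 then u else 0)) :=
        Finset.sum_le_sum fun k _ => hpt k
    _ = (∑ k, hammingDist (emb s x X k) (emb t y Y k))
          + 2 * ∑ k, (if y k ≠ 0 then u else 0) := by
        rw [Finset.sum_add_distrib, Finset.mul_sum]
    _ = (∑ k, hammingDist (emb s x X k) (emb t y Y k)) + 2 * (u * t) := by
        congr 1
        rw [← Finset.sum_filter, Finset.sum_const, smul_eq_mul,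
          (show (filter (fun a => y a ≠ 0) univ).card = t from hy)]
        ring

lemma same_level_le {m n s u : ℕ} (x x' : Fin n → ZMod 2)
    (hx : hammingNorm x = s) (hx' : hammingNorm x' = s)
    (X X' : Fin s → Fin m → ZMod 2)
    (hXu : ∀ j, hammingNorm (X j) = u) (hX'u : ∀ j, hammingNorm (X' j) = u) :
    u * hammingDist x x' ≤ ∑ k, hammingDist (emb s x X k) (emb s x' X' k) := by
  have hpt : ∀ k, (if x k ≠ x' k then u else 0)
      ≤ hammingDist (emb s x X k) (emb s x' X' k) := by
    intro k
    by_cases hk : x k ≠ x' k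
    · rw [if_pos hk]
      by_cases h1 : x k = 0
      · have h2 : x' k ≠ 0 := fun h => hk (h1.trans h.symm)
        have hA0 : emb s x X k = 0 := by simp [emb, h1]
        rw [hA0, hammingDist_comm, hammingDist_zero_right,
          emb_norm_apply x' hx' X' hX'u k, if_pos h2]
      · by_cases h2 : x' k = 0
        · have hB0 : emb s x' X' k = 0 := by simp [emb, h2]
          rw [hB0, hammingDist_zero_right, emb_norm_apply x hx X hXu k, if_pos h1]
        · exact absurd ((zmod2_ne_zero _ h1).trans (zmod2_ne_zero _ h2).symm) hk
    · rw [if_neg hk]; exact Nat.zero_le _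
  calc u * hammingDist x x' = ∑ k, (if x k ≠ x' k then u else 0) := by
        rw [← Finset.sum_filter, Finset.sum_const, smul_eq_mul,
          (show (filter (fun a => ¬x a = x' a) univ).card = hammingDist x x' from rfl), mul_comm]
    _ ≤ _ := Finset.sum_le_sum fun k _ => hpt k

lemma indicator_norm {n w : ℕ} (hwn : w ≤ n) :
    ∃ x : Fin n → ZMod 2, hammingNorm x = w := by
  classical
  obtain ⟨S0, -, hS0⟩ := Finset.exists_subset_card_eq (s := (univ : Finset (Fin n))) (n := w)
    (by simpa using hwn)
  refine ⟨fun k => if k ∈ S0 then 1 else 0, ?_⟩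
  have h : (univ.filter fun k => (if k ∈ S0 then (1 : ZMod 2) else 0) ≠ 0) = S0 := by
    ext k; by_cases hk : k ∈ S0 <;> simp [hk]
  calc hammingNorm (fun k => if k ∈ S0 then (1 : ZMod 2) else 0)
      = (univ.filter fun k => (if k ∈ S0 then (1 : ZMod 2) else 0) ≠ 0).card := rfl
    _ = S0.card := by rw [h]
    _ = w := hS0

lemma Bmax_spec (n w d : ℕ) (hwn : w ≤ n) :
    ∃ D : Finset (Fin n → ZMod 2), D.Nonempty ∧ (∀ x ∈ D, hammingNorm x = w) ∧
      (∀ x ∈ D, ∀ y ∈ D, x ≠ y → 2 * d ≤ hammingDist x y) ∧ D.card = Bmax n w d := by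
  classical
  have hbdd : BddAbove { c | ∃ C : Finset (Fin n → ZMod 2), C.Nonempty ∧
      (∀ x ∈ C, hammingNorm x = w) ∧
      (∀ x ∈ C, ∀ y ∈ C, x ≠ y → 2 * d ≤ hammingDist x y) ∧ C.card = c } := by
    refine ⟨Fintype.card (Fin n → ZMod 2), ?_⟩
    rintro c ⟨C, -, -, -, rfl⟩
    exact Finset.card_le_univ C
  have hne : Set.Nonempty { c | ∃ C : Finset (Fin n → ZMod 2), C.Nonempty ∧
      (∀ x ∈ C, hammingNorm x = w) ∧
      (∀ x ∈ C, ∀ y ∈ C, x ≠ y → 2 * d ≤ hammingDist x y) ∧ C.card = c } := by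
    obtain ⟨x0, hx0⟩ := indicator_norm hwn
    refine ⟨1, {x0}, Finset.singleton_nonempty _, ?_, ?_, Finset.card_singleton _⟩
    · intro x hx; rw [Finset.mem_singleton] at hx; subst hx; exact hx0
    · intro x hx y hy hxy
      rw [Finset.mem_singleton] at hx hy
      exact absurd (hx.trans hy.symm) hxy
  exact Nat.sSup_mem hne hbdd

lemma Amax_spec (m n u d : ℕ) (hum : u ≤ m) :
    ∃ C : Finset (Fin n → Fin m → ZMod 2), isCWAC m n u d C ∧ C.card = Amax m n u d := by
  classical
  have hbdd : BddAbove { c | ∃ C : Finset (Fin n → Fin m → ZMod 2),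
      isCWAC m n u d C ∧ C.card = c } := by
    refine ⟨Fintype.card (Fin n → Fin m → ZMod 2), ?_⟩
    rintro c ⟨C, -, rfl⟩
    exact Finset.card_le_univ C
  have hne : Set.Nonempty { c | ∃ C : Finset (Fin n → Fin m → ZMod 2),
      isCWAC m n u d C ∧ C.card = c } := by
    obtain ⟨c0, hc0⟩ := indicator_norm (n := m) hum
    refine ⟨1, {fun _ => c0}, ⟨Finset.singleton_nonempty _, ?_, ?_⟩, Finset.card_singleton _⟩
    · intro X hX k; rw [Finset.mem_singleton] at hX; subst hX; exact hc0
    · intro X hX Y hY hXY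
      rw [Finset.mem_singleton] at hX hY
      exact absurd (hX.trans hY.symm) hXY
  exact Nat.sSup_mem hne hbdd

end aux

theorem refined_upper_bound_CWAC (m n w d l : ℕ) (hw : 1 ≤ w) (hwm : w ≤ m)
    (hl : 1 ≤ l) (ns : ℕ → ℕ) (h0 : ns 0 = n)
    (hpos : ∀ i < l, 1 ≤ ns i)
    (hanti : ∀ i, ∀ j, i < j → j < l → ns j < ns i)
    (hdvd : ∀ i < l, ns i ∣ n * w)
    (hle : ∀ i < l, ns i ≤ n)
    (hge : ∀ i < l, n * w ≤ m * ns i)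
    (hstep : ∀ i, 1 ≤ i → i < l → ns i * (n * w) ≤ (n * w - d) * ns (i - 1)) :
    ∑ i ∈ Finset.range l, Bmax n (ns i) d * Amax m (ns i) (n * w / ns i) d
      ≤ Bmax (m * n) (n * w) d := by
  classical
  have hn1 : 1 ≤ n := by rw [← h0]; exact hpos 0 hl
  have hW1 : 1 ≤ n * w := Nat.one_le_iff_ne_zero.mpr (Nat.mul_ne_zero (by omega) (by omega))
  have hsu : ∀ i < l, ns i * (n * w / ns i) = n * w := fun i hi => Nat.mul_div_cancel' (hdvd i hi)
  have hu1 : ∀ i < l, 1 ≤ n * w / ns i := by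
    intro i hi
    have h1 : ns i ≤ n * w :=
      le_trans (hle i hi) (Nat.le_mul_of_pos_right n (by omega))
    exact (Nat.one_le_div_iff (hpos i hi)).mpr h1
  have hum : ∀ i < l, n * w / ns i ≤ m := by
    intro i hi
    have h2 : (n * w / ns i) * ns i ≤ m * ns i := by
      rw [mul_comm (n * w / ns i), hsu i hi]; exact hge i hi
    exact Nat.le_of_mul_le_mul_right h2 (hpos i hi)
  choose D hD using fun (i : ℕ) (hi : i < l) => Bmax_spec n (ns i) d (hle i hi)
  choose C hC using fun (i : ℕ) (hi : i < l) => Amax_spec m (ns i) (n * w / ns i) d (hum i hi)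
  have hxnorm : ∀ i (hi : i < l), ∀ x ∈ D i hi, hammingNorm x = ns i :=
    fun i hi x hx => (hD i hi).2.1 x hx
  have hcolnorm : ∀ i (hi : i < l), ∀ X ∈ C i hi, ∀ j, hammingNorm (X j) = n * w / ns i :=
    fun i hi X hX j => (hC i hi).1.2.1 X hX j
  have hcolne : ∀ i (hi : i < l), ∀ X ∈ C i hi, ∀ j, X j ≠ 0 := by
    intro i hi X hX j
    have h1 := hcolnorm i hi X hX j
    have h2 := hu1 i hi
    exact hammingNorm_pos_iff.mp (by omega)
  set g : ℕ → Finset (Fin (m * n) → ZMod 2) := fun i =>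
    if hi : i < l then ((D i hi) ×ˢ (C i hi)).image (fun p => flat (emb (ns i) p.1 p.2)) else ∅
    with hg
  have hmemg : ∀ i (hi : i < l), ∀ V ∈ g i, ∃ x, ∃ _ : x ∈ D i hi, ∃ X, ∃ _ : X ∈ C i hi,
      V = flat (emb (ns i) x X) := by
    intro i hi V hV
    simp only [hg, dif_pos hi] at hV
    obtain ⟨p, hp, rfl⟩ := Finset.mem_image.mp hV
    obtain ⟨h1, h2⟩ := Finset.mem_product.mp hp
    exact ⟨p.1, h1, p.2, h2, rfl⟩
  have hVnorm : ∀ i (hi : i < l), ∀ x ∈ D i hi, ∀ X ∈ C i hi,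
      hammingNorm (flat (emb (ns i) x X)) = n * w := by
    intro i hi x hx X hX
    rw [hammingNorm_flat, emb_norm x (hxnorm i hi x hx)]
    calc ∑ j, hammingNorm (X j) = ∑ _j : Fin (ns i), (n * w / ns i) :=
          Finset.sum_congr rfl fun j _ => hcolnorm i hi X hX j
      _ = ns i * (n * w / ns i) := by
          rw [Finset.sum_const, smul_eq_mul, Finset.card_univ, Fintype.card_fin]
      _ = n * w := hsu i hi
  -- same-level minimum distance
  have hsame : ∀ i (hi : i < l), ∀ x ∈ D i hi, ∀ X ∈ C i hi, ∀ y ∈ D i hi, ∀ Y ∈ C i hi,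
      ¬(x = y ∧ X = Y) → 2 * d ≤ arrDist (emb (ns i) x X) (emb (ns i) y Y) := by
    intro i hi x hx X hX y hy Y hY hne
    by_cases hxy : x = y
    · subst hxy
      have hXY : X ≠ Y := fun h => hne ⟨rfl, h⟩
      have h1 := (hC i hi).1.2.2 X hX Y hY hXY
      calc 2 * d ≤ arrDist X Y := h1
        _ = arrDist (emb (ns i) x X) (emb (ns i) x Y) := by
            simp only [arrDist]
            exact (emb_arrDist x (hxnorm i hi x hx) X Y).symm
    · have h1 := (hD i hi).2.2.1 x hx y hy hxy
      have h2 := same_level_le x y (hxnorm i hi x hx) (hxnorm i hi y hy) X Y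
        (hcolnorm i hi X hX) (hcolnorm i hi Y hY)
      have hu := hu1 i hi
      calc 2 * d ≤ 1 * (2 * d) := by omega
        _ ≤ (n * w / ns i) * hammingDist x y := Nat.mul_le_mul hu h1
        _ ≤ ∑ k, hammingDist (emb (ns i) x X k) (emb (ns i) y Y k) := h2
        _ = arrDist (emb (ns i) x X) (emb (ns i) y Y) := rfl
  -- cross-level minimum distance
  have hcross : ∀ i j (hi : i < l) (hj : j < l), i < j →
      ∀ x ∈ D i hi, ∀ X ∈ C i hi, ∀ y ∈ D j hj, ∀ Y ∈ C j hj,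
      2 * d ≤ arrDist (emb (ns i) x X) (emb (ns j) y Y) := by
    intro i j hi hj hij x hx X hX y hy Y hY
    have hc := cross_le x y (hxnorm i hi x hx) (hxnorm j hj y hy) X Y
      (hcolnorm i hi X hX) (hcolnorm j hj Y hY)
    rw [hsu i hi, hsu j hj] at hc
    -- hc : n*w + n*w ≤ S + 2 * (u * ns j)
    have hstep' := hstep j (by omega) hj
    have hmono : ns (j - 1) ≤ ns i := by
      rcases Nat.lt_or_ge i (j - 1) with h | h
      · exact le_of_lt (hanti i (j - 1) h (by omega))
      · have : i = j - 1 := by omega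
        rw [this]
    have h3 : ns j * (n * w) ≤ (n * w - d) * ns i :=
      le_trans hstep' (Nat.mul_le_mul_left _ hmono)
    have h4 : (n * w / ns i) * ns j * ns i = ns j * (n * w) := by
      rw [mul_comm (n * w / ns i) (ns j), mul_assoc, mul_comm (n * w / ns i) (ns i), hsu i hi]
    have h5 : (n * w / ns i) * ns j ≤ n * w - d := by
      refine Nat.le_of_mul_le_mul_right ?_ (hpos i hi)
      rw [h4]
      calc ns j * (n * w) ≤ (n * w - d) * ns i := h3
        _ = (n * w - d) * ns i := rfl
    have h6 : d < n * w := by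
      by_contra hcon
      have hz : n * w - d = 0 := by omega
      rw [hz] at h3
      have := Nat.mul_le_mul_right (n * w) (hpos j hj)
      omega
    have h7 : (n * w / ns i) * ns j + d ≤ n * w := by omega
    -- conclude
    have h8 : 2 * d + 2 * ((n * w / ns i) * ns j) ≤ n * w + n * w := by omega
    calc 2 * d ≤ (n * w + n * w) - 2 * ((n * w / ns i) * ns j) := by omega
      _ ≤ arrDist (emb (ns i) x X) (emb (ns j) y Y) := by
          have : arrDist (emb (ns i) x X) (emb (ns j) y Y)
              = ∑ k, hammingDist (emb (ns i) x X k) (emb (ns j) y Y k) := rfl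
          omega
  -- the big code
  set E := (Finset.range l).biUnion g with hE
  have hdisj : ∀ i ∈ Finset.range l, ∀ j ∈ Finset.range l, i ≠ j → Disjoint (g i) (g j) := by
    intro i hi j hj hij
    rw [Finset.mem_range] at hi hj
    rw [Finset.disjoint_left]
    intro V hVi hVj
    obtain ⟨x, hx, X, hX, rfl⟩ := hmemg i hi V hVi
    obtain ⟨y, hy, Y, hY, hVeq⟩ := hmemg j hj _ hVj
    have hembeq := flat_inj _ _ hVeq
    have h1 : (univ.filter fun k => emb (ns i) x X k ≠ 0).card = ns i :=
      emb_filter_card x (hxnorm i hi x hx) X (hcolne i hi X hX)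
    have h2 : (univ.filter fun k => emb (ns j) y Y k ≠ 0).card = ns j :=
      emb_filter_card y (hxnorm j hj y hy) Y (hcolne j hj Y hY)
    rw [hembeq] at h1
    have hns : ns i = ns j := h1.symm.trans h2
    rcases Nat.lt_or_ge i j with h | h
    · have := hanti i j h hj; omega
    · have hij' : j < i := by omega
      have := hanti j i hij' hi; omega
  have hinj : ∀ i (hi : i < l), Set.InjOn
      (fun p : (Fin n → ZMod 2) × (Fin (ns i) → Fin m → ZMod 2) => flat (emb (ns i) p.1 p.2))
      ((D i hi) ×ˢ (C i hi) : Finset _) := by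
    intro i hi p hp q hq h
    obtain ⟨hp1, hp2⟩ := Finset.mem_product.mp (Finset.mem_coe.mp hp)
    obtain ⟨hq1, hq2⟩ := Finset.mem_product.mp (Finset.mem_coe.mp hq)
    have hh := emb_inj p.1 q.1 (hxnorm i hi _ hp1) (hxnorm i hi _ hq1) p.2 q.2
      (hcolne i hi _ hp2) (hcolne i hi _ hq2) (flat_inj _ _ h)
    exact Prod.ext hh.1 hh.2
  have hcardE : E.card = ∑ i ∈ Finset.range l, (g i).card := by
    rw [hE]; exact Finset.card_biUnion hdisj
  have hgcard : ∀ i ∈ Finset.range l,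
      (g i).card = Bmax n (ns i) d * Amax m (ns i) (n * w / ns i) d := by
    intro i hi
    rw [Finset.mem_range] at hi
    have hgi : g i = ((D i hi) ×ˢ (C i hi)).image (fun p => flat (emb (ns i) p.1 p.2)) := by
      simp only [hg, dif_pos hi]
    rw [hgi, Finset.card_image_of_injOn (hinj i hi), Finset.card_product,
      (hD i hi).2.2.2, (hC i hi).2]
  -- E is a valid code
  have hEne : E.Nonempty := by
    obtain ⟨x, hx⟩ := (hD 0 hl).1
    obtain ⟨X, hX⟩ := (hC 0 hl).1.1
    refine ⟨flat (emb (ns 0) x X), ?_⟩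
    rw [hE]
    refine Finset.mem_biUnion.mpr ⟨0, Finset.mem_range.mpr hl, ?_⟩
    simp only [hg]
    rw [dif_pos (show 0 < l by omega)]
    exact Finset.mem_image.mpr ⟨(x, X), Finset.mem_product.mpr ⟨hx, hX⟩, rfl⟩
  have hEnorm : ∀ V ∈ E, hammingNorm V = n * w := by
    intro V hV
    rw [hE] at hV
    obtain ⟨i, hi, hVi⟩ := Finset.mem_biUnion.mp hV
    rw [Finset.mem_range] at hi
    obtain ⟨x, hx, X, hX, rfl⟩ := hmemg i hi V hVi
    exact hVnorm i hi x hx X hX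
  have hEdist : ∀ V ∈ E, ∀ V' ∈ E, V ≠ V' → 2 * d ≤ hammingDist V V' := by
    intro V hV V' hV' hne
    rw [hE] at hV hV'
    obtain ⟨i, hi, hVi⟩ := Finset.mem_biUnion.mp hV
    obtain ⟨j, hj, hVj⟩ := Finset.mem_biUnion.mp hV'
    rw [Finset.mem_range] at hi hj
    obtain ⟨x, hx, X, hX, rfl⟩ := hmemg i hi V hVi
    obtain ⟨y, hy, Y, hY, rfl⟩ := hmemg j hj V' hVj
    rw [hammingDist_flat]
    rcases lt_trichotomy i j with h | h | h
    · exact hcross i j hi hj h x hx X hX y hy Y hY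
    · subst h
      refine hsame i hi x hx X hX y hy Y hY ?_
      rintro ⟨rfl, rfl⟩
      exact hne rfl
    · rw [arrDist_comm]
      exact hcross j i hj hi h y hy Y hY x hx X hX
  -- conclude
  have hbdd : BddAbove { c | ∃ C : Finset (Fin (m * n) → ZMod 2), C.Nonempty ∧
      (∀ x ∈ C, hammingNorm x = n * w) ∧
      (∀ x ∈ C, ∀ y ∈ C, x ≠ y → 2 * d ≤ hammingDist x y) ∧ C.card = c } := by
    refine ⟨Fintype.card (Fin (m * n) → ZMod 2), ?_⟩
    rintro c ⟨C, -, -, -, rfl⟩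
    exact Finset.card_le_univ C
  have hfin : E.card ≤ Bmax (m * n) (n * w) d :=
    le_csSup hbdd ⟨E, hEne, hEnorm, hEdist, rfl⟩
  calc ∑ i ∈ Finset.range l, Bmax n (ns i) d * Amax m (ns i) (n * w / ns i) d
      = ∑ i ∈ Finset.range l, (g i).card := (Finset.sum_congr rfl hgcard).symm
    _ = E.card := hcardE.symm
    _ ≤ Bmax (m * n) (n * w) d := hfin
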